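/- Let g be a finite-dimensional semisimple real Lie algebra equipped with an invariant inner product, i.e. a positive-definite symmetric bilinear form B with B([x,y],z) + B(y,[x,z]) = 0 for all x,y,z ∈ g. Let h ∈ g be such that the centralizer g_h = {f ∈ g : [f,h] = 0} is an abelian subalgebra. Then the Lie subalgebra of g generated by the subspace [g,h] = {[x,h] : x ∈ g} is all of g. -/

import Mathlib

/-- Let `g` be a finite-dimensional real Lie algebra with an invariant
inner product which is semisimple in the sense that it has no nonzero abelian ideals.
If `h ∈ g` has abelian centralizer, then the Lie subalgebra generated by the subspace
`[g,h] = {⁅x,h⁆ | x ∈ g}` is all of `g`. -/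
theorem lieSpan_bracket_range_eq_top_of_abelian_centralizer
    {L : Type*} [LieRing L] [LieAlgebra ℝ L] [FiniteDimensional ℝ L]
    (B : L →ₗ[ℝ] L →ₗ[ℝ] ℝ)
    (hsymm : ∀ x y : L, B x y = B y x)
    (hposdef : ∀ v : L, v ≠ 0 → 0 < B v v)
    (hinv : ∀ x y z : L, B ⁅x, y⁆ z + B y ⁅x, z⁆ = 0)
    (hss : ∀ I : LieIdeal ℝ L, (∀ a b : L, a ∈ I → b ∈ I → ⁅a, b⁆ = 0) → I = ⊥)
    (h : L)
    (hcen : ∀ a b : L, ⁅a, h⁆ = 0 → ⁅b, h⁆ = 0 → ⁅a, b⁆ = 0) :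
    LieSubalgebra.lieSpan ℝ L {v : L | ∃ w : L, v = ⁅w, h⁆} = ⊤ := by
  set gen : Set L := {v : L | ∃ w : L, v = ⁅w, h⁆} with hgen
  set S := LieSubalgebra.lieSpan ℝ L gen with hSdef
  -- basic facts about B
  have hrefl : B.IsRefl := fun x y hxy => by rw [hsymm]; exact hxy
  have hzero : ∀ v : L, (∀ w : L, B v w = 0) → v = 0 := by
    intro v hv
    by_contra hne
    exact absurd (hv v) (ne_of_gt (hposdef v hne))
  have hnd : ∀ W : Submodule ℝ L, (LinearMap.BilinForm.restrict B W).Nondegenerate := by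
    intro W
    refine ⟨fun m hm => ?_, fun m hm => ?_⟩
    have : (m : L) = 0 := by
      by_contra hne
      exact absurd (hm m) (ne_of_gt (hposdef _ hne))
    exact Subtype.ext this
    have : (m : L) = 0 := by
      by_contra hne
      exact absurd (hm m) (ne_of_gt (hposdef _ hne))
    exact Subtype.ext this
  -- B ⁅k,h⁆ w = - B ⁅w,h⁆ k
  have hswap : ∀ k w : L, B ⁅k, h⁆ w = - B ⁅w, h⁆ k := by
    intro k w
    have h1 := hinv k h w
    have h2 := hinv w h k
    have h3 : B h ⁅w, k⁆ = - B h ⁅k, w⁆ := by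
      rw [← lie_skew k w, map_neg, neg_neg]
    linarith
  -- orthogonality to generators implies centralizing h
  have hcent : ∀ k : L, (∀ w : L, B ⁅w, h⁆ k = 0) → ⁅k, h⁆ = 0 := by
    intro k hk
    apply hzero
    intro w
    rw [hswap k w, hk w, neg_zero]
  have hgenS : gen ⊆ S := LieSubalgebra.subset_lieSpan
  -- if k centralizes h, then ⁅k, s⁆ ∈ S for s ∈ S
  have hkS : ∀ k : L, ⁅k, h⁆ = 0 → ∀ s ∈ S, ⁅k, s⁆ ∈ S := by
    intro k hk
    let T : LieSubalgebra ℝ L :=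
      { carrier := {s | s ∈ S ∧ ⁅k, s⁆ ∈ S}
        add_mem' := by
          rintro a b ⟨ha1, ha2⟩ ⟨hb1, hb2⟩
          exact ⟨S.add_mem ha1 hb1, by rw [lie_add]; exact S.add_mem ha2 hb2⟩
        zero_mem' := ⟨S.zero_mem, by rw [lie_zero]; exact S.zero_mem⟩
        smul_mem' := by
          rintro c a ⟨ha1, ha2⟩
          exact ⟨S.smul_mem c ha1, by rw [lie_smul]; exact S.smul_mem c ha2⟩
        lie_mem' := by
          rintro a b ⟨ha1, ha2⟩ ⟨hb1, hb2⟩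
          refine ⟨S.lie_mem ha1 hb1, ?_⟩
          rw [leibniz_lie]
          exact S.add_mem (S.lie_mem ha2 hb1) (S.lie_mem ha1 hb2) }
    have hle : S ≤ T := by
      rw [hSdef]
      apply LieSubalgebra.lieSpan_le.2
      rintro v ⟨w, rfl⟩
      refine ⟨hgenS ⟨w, rfl⟩, ?_⟩
      have : ⁅k, ⁅w, h⁆⁆ = ⁅⁅k, w⁆, h⁆ := by
        rw [leibniz_lie, hk, lie_zero, add_zero]
      rw [this]
      exact hgenS ⟨⁅k, w⁆, rfl⟩
    intro s hs
    exact (hle hs).2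
  -- the span of the generators
  set U : Submodule ℝ L := Submodule.span ℝ gen with hUdef
  have hUS : U ≤ S.toSubmodule := Submodule.span_le.2 hgenS
  have hcomplU : IsCompl U (LinearMap.BilinForm.orthogonal B U) :=
    LinearMap.BilinForm.isCompl_orthogonal_of_restrict_nondegenerate (B := B) hrefl (hnd U)
  -- S is an ideal
  have hideal : ∀ x s : L, s ∈ S → ⁅x, s⁆ ∈ S := by
    intro x s hs
    have hx : x ∈ U ⊔ LinearMap.BilinForm.orthogonal B U := by
      rw [hcomplU.sup_eq_top]; trivial
    obtain ⟨u, hu, k, hk, rfl⟩ := Submodule.mem_sup.1 hx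
    rw [add_lie]
    refine S.add_mem (S.lie_mem (hUS hu) hs) ?_
    have hkc : ⁅k, h⁆ = 0 := by
      apply hcent
      intro w
      exact hk _ (Submodule.subset_span ⟨w, rfl⟩)
    exact hkS k hkc s hs
  -- The orthogonal complement of S is an abelian ideal
  let K : LieIdeal ℝ L :=
    { toSubmodule := LinearMap.BilinForm.orthogonal B S.toSubmodule
      lie_mem := fun {x m} hm => by
        intro s hs
        have h1 := hinv x s m
        have h2 : B ⁅x, s⁆ m = 0 := hm _ (hideal x s hs)
        simpa [LinearMap.BilinForm.IsOrtho, h2] using h1 }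
  have hKbot : K = ⊥ := by
    apply hss
    intro a b ha hb
    have ha2 : a ∈ LinearMap.BilinForm.orthogonal B S.toSubmodule := ha
    have hb2 : b ∈ LinearMap.BilinForm.orthogonal B S.toSubmodule := hb
    have ha' : ⁅a, h⁆ = 0 := hcent a fun w => ha2 _ (hUS (Submodule.subset_span ⟨w, rfl⟩))
    have hb' : ⁅b, h⁆ = 0 := hcent b fun w => hb2 _ (hUS (Submodule.subset_span ⟨w, rfl⟩))
    exact hcen a b ha' hb'
  have hKsub : LinearMap.BilinForm.orthogonal B S.toSubmodule = ⊥ := by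
    have := congrArg (fun I : LieIdeal ℝ L => (I : Submodule ℝ L)) hKbot
    exact (LieSubmodule.toSubmodule_eq_bot (N := K)).2 hKbot
  have hcomplS : IsCompl (S.toSubmodule) (LinearMap.BilinForm.orthogonal B S.toSubmodule) :=
    LinearMap.BilinForm.isCompl_orthogonal_of_restrict_nondegenerate (B := B) hrefl (hnd _)
  have htop : S.toSubmodule = ⊤ := by
    have := hcomplS.sup_eq_top
    rwa [hKsub, sup_bot_eq] at this
  rw [hSdef] at htop
  rw [← LieSubalgebra.toSubmodule_inj]
  simpa using htop
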